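/- Let M, N ⊆ ℝⁿ be linear subspaces and A ∈ ℝ^{n×n} an invertible matrix. Define δ(M,N) := sup over unit vectors u ∈ M of inf over v ∈ N of ‖u−v‖₂, and A(M) := {Av : v ∈ M}. Then δ(A(M), A(N)) ≤ κ(A) · δ(M, N), where κ(A) = σ_max(A)/σ_min(A) is the condition number of A. -/
import Mathlib


open scoped BigOperators

/-- The one-sided gap `δ(M,N) = sup_{u ∈ M, ‖u‖=1} inf_{v ∈ N} ‖u − v‖` between two
subspaces (with the convention that the supremum over the empty set is `0`). -/
noncomputable def gapδ {E : Type*} [NormedAddCommGroup E] [InnerProductSpace ℝ E]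
    (M N : Submodule ℝ E) : ℝ :=
  ⨆ u : {u : E // u ∈ M ∧ ‖u‖ = 1}, ⨅ v : N, ‖(u : E) - (v : E)‖

/-- for linear subspaces `M, N ⊆ ℝⁿ` and an invertible matrix `A` (here: a
continuous linear equivalence of `ℝⁿ`), `δ(A(M), A(N)) ≤ κ(A)·δ(M,N)`, where the condition
number `κ(A) = σ_max(A)/σ_min(A) = ‖A‖·‖A⁻¹‖` (operator norms). -/
theorem stmt2 {n : ℕ}
    (A : EuclideanSpace ℝ (Fin n) ≃L[ℝ] EuclideanSpace ℝ (Fin n))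
    (M N : Submodule ℝ (EuclideanSpace ℝ (Fin n))) :
    gapδ (M.map (A : EuclideanSpace ℝ (Fin n) →ₗ[ℝ] EuclideanSpace ℝ (Fin n)))
        (N.map (A : EuclideanSpace ℝ (Fin n) →ₗ[ℝ] EuclideanSpace ℝ (Fin n)))
      ≤ ‖(A : EuclideanSpace ℝ (Fin n) →L[ℝ] EuclideanSpace ℝ (Fin n))‖ *
          ‖(A.symm : EuclideanSpace ℝ (Fin n) →L[ℝ] EuclideanSpace ℝ (Fin n))‖ *
          gapδ M N := by
  set E := EuclideanSpace ℝ (Fin n)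
  set c : ℝ := ‖(A : E →L[ℝ] E)‖
  set c' : ℝ := ‖(A.symm : E →L[ℝ] E)‖
  have hc : 0 ≤ c := norm_nonneg _
  have hc' : 0 ≤ c' := norm_nonneg _
  -- δ(M,N) ≥ 0
  have hδ0 : 0 ≤ gapδ M N :=
    Real.iSup_nonneg fun u => Real.iInf_nonneg fun v => norm_nonneg _
  apply Real.iSup_le _ (by positivity)
  rintro ⟨u, hu, hu1⟩
  -- the preimage w := A⁻¹ u lies in M and is nonzero
  set w : E := A.symm u with hw
  have hwM : w ∈ M := by
    obtain ⟨m, hm, rfl⟩ := hu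
    simpa [hw] using hm
  have hw0 : w ≠ 0 := by
    intro h
    have : u = 0 := by
      have := congrArg A h
      simpa [hw] using this
    simp [this] at hu1
  have hwnorm : ‖w‖ ≤ c' := by
    have h := (A.symm : E →L[ℝ] E).le_opNorm u
    rw [hu1, mul_one] at h
    exact h
  have hwpos : (0:ℝ) < ‖w‖ := norm_pos_iff.mpr hw0
  set ww : E := ‖w‖⁻¹ • w with hww
  have hwwM : ww ∈ M := M.smul_mem _ hwM
  have hww1 : ‖ww‖ = 1 := by
    rw [hww, norm_smul, norm_inv, norm_norm, inv_mul_cancel₀ hwpos.ne']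
  -- bound the inner infimum
  have key : ∀ v' : N, (⨅ v : (N.map (A : E →ₗ[ℝ] E)), ‖u - (v : E)‖)
      ≤ (c * ‖w‖) * ‖ww - (v' : E)‖ := by
    rintro ⟨v', hv'⟩
    have hmem : A (‖w‖ • v') ∈ N.map (A : E →ₗ[ℝ] E) :=
      ⟨‖w‖ • v', N.smul_mem _ hv', rfl⟩
    have hle : (⨅ v : (N.map (A : E →ₗ[ℝ] E)), ‖u - (v : E)‖)
        ≤ ‖u - A (‖w‖ • v')‖ := by
      exact ciInf_le ⟨0, fun x => by rintro ⟨i, rfl⟩; exact norm_nonneg _⟩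
        (⟨A (‖w‖ • v'), hmem⟩ : (N.map (A : E →ₗ[ℝ] E)))
    refine hle.trans ?_
    have hAw : A w = u := by simp [hw]
    have heq : u - A (‖w‖ • v') = A (‖w‖ • (ww - v')) := by
      rw [smul_sub, hww, smul_smul, mul_inv_cancel₀ hwpos.ne', one_smul, map_sub, hAw]
    rw [heq]
    calc ‖A (‖w‖ • (ww - v'))‖ ≤ c * ‖‖w‖ • (ww - v')‖ :=
          (A : E →L[ℝ] E).le_opNorm _
      _ = (c * ‖w‖) * ‖ww - v'‖ := by
          rw [norm_smul, norm_norm]; ring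
  have step1 : (⨅ v : (N.map (A : E →ₗ[ℝ] E)), ‖u - (v : E)‖)
      ≤ (c * ‖w‖) * ⨅ v' : N, ‖ww - (v' : E)‖ := by
    rw [Real.mul_iInf_of_nonneg (by positivity)]
    exact le_ciInf key
  refine step1.trans ?_
  -- compare with gapδ M N
  have step2 : (⨅ v' : N, ‖ww - (v' : E)‖) ≤ gapδ M N := by
    have hbdd : BddAbove (Set.range fun u : {u : E // u ∈ M ∧ ‖u‖ = 1} =>
        ⨅ v : N, ‖(u : E) - (v : E)‖) := by
      refine ⟨1, ?_⟩
      rintro x ⟨⟨z, hz, hz1⟩, rfl⟩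
      have : (⨅ v : N, ‖z - (v : E)‖) ≤ ‖z - ((0 : N) : E)‖ :=
        ciInf_le ⟨0, fun x => by rintro ⟨i, rfl⟩; exact norm_nonneg _⟩ (0 : N)
      simpa [hz1] using this
    exact le_ciSup hbdd (⟨ww, hwwM, hww1⟩ : {u : E // u ∈ M ∧ ‖u‖ = 1})
  calc (c * ‖w‖) * ⨅ v' : N, ‖ww - (v' : E)‖
      ≤ (c * c') * ⨅ v' : N, ‖ww - (v' : E)‖ := by
        have h0 : 0 ≤ ⨅ v' : N, ‖ww - (v' : E)‖ :=
          Real.iInf_nonneg fun _ => norm_nonneg _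
        exact mul_le_mul_of_nonneg_right (mul_le_mul_of_nonneg_left hwnorm hc) h0
    _ ≤ c * c' * gapδ M N := mul_le_mul_of_nonneg_left step2 (by positivity)
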